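/- Fix p ∈ (0, 1/2), α ∈ (0, 1), and δ > 0. There exists k₀ such that for every integer k ≥ k₀, every u with 1 ≤ u ≤ k, every n, every (u, t)-update-efficient injective encoding φ : F₂ᵏ → F₂ⁿ with t ≤ (1−α)·log₂(Σ_{i=0}^{u} C(k, i)) / log₂((1−p)/p), and every decoder ψ : F₂ⁿ → F₂ᵏ, the average error probability 2^{−k}·Σ_{x ∈ F₂ᵏ} Pr(ψ(φ(x) + e) ≠ x) over BSC(p) is at least 1 − δ. -/

import Mathlib

/-- Probability that BSC(p) produces the noise vector `e` (i.i.d. coordinates). -/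
noncomputable def bscProb (p : ℝ) {n : ℕ} (e : Fin n → ZMod 2) : ℝ :=
  p ^ hammingNorm e * (1 - p) ^ (n - hammingNorm e)

open Finset Real

lemma bsc_nonneg {p : ℝ} (hp0 : 0 ≤ p) (hp1 : p ≤ 1) {n : ℕ} (e : Fin n → ZMod 2) :
    0 ≤ bscProb p e :=
  mul_nonneg (pow_nonneg hp0 _) (pow_nonneg (by linarith) _)

lemma bscProb_eq_prod (p : ℝ) {n : ℕ} (e : Fin n → ZMod 2) :
    bscProb p e = ∏ i, (if e i ≠ 0 then p else 1 - p) := by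
  rw [Finset.prod_ite, Finset.prod_const, Finset.prod_const, bscProb, hammingNorm]
  congr 2
  have := Finset.card_filter_add_card_filter_not
    (s := (univ : Finset (Fin n))) (p := fun i => e i ≠ 0)
  simp only [Finset.card_univ, Fintype.card_fin] at this
  omega

lemma bsc_sum_one (p : ℝ) (n : ℕ) : ∑ e : Fin n → ZMod 2, bscProb p e = 1 := by
  simp_rw [bscProb_eq_prod]
  rw [← Fintype.prod_sum (f := fun (_ : Fin n) (v : ZMod 2) => if v ≠ 0 then p else 1 - p)]
  have h1 : (∑ v : ZMod 2, if v ≠ 0 then p else 1 - p) = 1 := by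
    rw [Finset.sum_ite, Finset.sum_const, Finset.sum_const,
      show (univ.filter (fun v : ZMod 2 => v ≠ 0)).card = 1 from by decide,
      show (univ.filter (fun v : ZMod 2 => ¬ v ≠ 0)).card = 1 from by decide]
    simp
  simp only [h1, Finset.prod_const_one]

lemma bsc_shift {p : ℝ} (hp0 : 0 < p) (hp1 : p < 1/2) {n t : ℕ} {a b : Fin n → ZMod 2}
    (h : hammingNorm (b - a) ≤ t) : bscProb p a ≤ ((1-p)/p)^t * bscProb p b := by
  have hq0 : (0:ℝ) < 1 - p := by linarith
  have hpq : p ≤ 1 - p := by linarith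
  have hAn : hammingNorm a ≤ n := by
    simpa using (hammingNorm_le_card_fintype (x := a))
  have hBn : hammingNorm b ≤ n := by
    simpa using (hammingNorm_le_card_fintype (x := b))
  have hBA : hammingNorm b ≤ hammingNorm a + t := by
    have h3 := hammingDist_triangle b a 0
    rw [hammingDist_zero_right, hammingDist_zero_right, hammingDist_comm b a, hammingDist_eq_hammingNorm, neg_add_eq_sub] at h3
    omega
  set A := hammingNorm a
  set B := hammingNorm b
  rw [bscProb, bscProb, div_pow, div_mul_eq_mul_div, le_div_iff₀ (pow_pos hp0 t)]
  have key : p^(A+t) * (1-p)^(n-A) ≤ p^B * (1-p)^((n-B)+t) := by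
    have e1 : A + t = B + (A+t-B) := by omega
    have e2 : (n-B)+t = (n-A) + (A+t-B) := by omega
    rw [e1, e2, pow_add, pow_add]
    calc p^B * p^(A+t-B) * (1-p)^(n-A)
        ≤ p^B * (1-p)^(A+t-B) * (1-p)^(n-A) := by
          have h4 := pow_le_pow_left₀ hp0.le hpq (A+t-B)
          exact mul_le_mul_of_nonneg_right
            (mul_le_mul_of_nonneg_left h4 (pow_nonneg hp0.le B)) (pow_nonneg hq0.le _)
      _ = p^B * ((1-p)^(n-A) * (1-p)^(A+t-B)) := by ring
  calc p^A * (1-p)^(n-A) * p^t = p^(A+t) * (1-p)^(n-A) := by rw [pow_add]; ring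
    _ ≤ p^B * (1-p)^((n-B)+t) := key
    _ = (1-p)^t * (p^B * (1-p)^(n-B)) := by rw [pow_add]; ring

lemma card_hammingNorm_eq (k i : ℕ) :
    (univ.filter fun e : Fin k → ZMod 2 => hammingNorm e = i).card = k.choose i := by
  have hmain : (univ.filter fun e : Fin k → ZMod 2 => hammingNorm e = i).card
      = (Finset.powersetCard i (univ : Finset (Fin k))).card := by
    apply Finset.card_bij (fun e _ => univ.filter fun j => e j ≠ 0)
    · intro e he
      rw [Finset.mem_powersetCard_univ]
      have := (Finset.mem_filter.mp he).2
      rw [hammingNorm] at this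
      convert this using 2
    · intro e1 h1 e2 h2 hee
      funext j
      have hj : (j ∈ univ.filter fun j => e1 j ≠ 0) ↔ (j ∈ univ.filter fun j => e2 j ≠ 0) := by
        rw [hee]
      simp only [Finset.mem_filter, Finset.mem_univ, true_and] at hj
      have hz : ∀ x : ZMod 2, x ≠ 0 → x = 1 := by decide
      by_cases hc : e1 j = 0
      · have : e2 j = 0 := by
          by_contra hcc
          exact hj.mpr hcc hc
        rw [hc, this]
      · rw [hz _ hc, hz _ (hj.mp hc)]
    · intro S hS
      rw [Finset.mem_powersetCard_univ] at hS
      refine ⟨fun j => if j ∈ S then 1 else 0, ?_, ?_⟩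
      · have hfilter : (univ.filter fun j : Fin k =>
            (if j ∈ S then (1:ZMod 2) else 0) ≠ 0) = S := by
          ext j
          by_cases hjS : j ∈ S <;> simp [hjS]
        simp only [Finset.mem_filter, Finset.mem_univ, true_and]
        rw [hammingNorm]
        rw [show ({j | (if j ∈ S then (1:ZMod 2) else 0) ≠ 0} : Finset (Fin k))
          = univ.filter fun j : Fin k => (if j ∈ S then (1:ZMod 2) else 0) ≠ 0 from rfl]
        rw [hfilter, hS]
      · ext j
        by_cases hjS : j ∈ S <;> simp [hjS]
  rw [hmain, Finset.card_powersetCard, Finset.card_univ, Fintype.card_fin]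

lemma card_ball (k u : ℕ) :
    (univ.filter fun e : Fin k → ZMod 2 => hammingNorm e ≤ u).card
      = ∑ i ∈ Finset.range (u+1), k.choose i := by
  rw [Finset.card_eq_sum_card_fiberwise (f := hammingNorm) (t := Finset.range (u+1))
    (fun e he => by simp only [Finset.mem_coe, Finset.mem_filter] at he; simp; omega)]
  apply Finset.sum_congr rfl
  intro i hi
  simp only [Finset.mem_range] at hi
  rw [Finset.filter_filter, ← card_hammingNorm_eq k i]
  congr 1
  apply Finset.filter_congr
  intro e _
  constructor
  · exact fun hh => hh.2
  · exact fun hh => ⟨by omega, hh⟩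

/-- fix `p ∈ (0,1/2)`, `α ∈ (0,1)`, `δ > 0`.  For all large enough `k`, any
`(u,t)`-update-efficient injective encoding `φ : F₂ᵏ → F₂ⁿ` (`1 ≤ u ≤ k`) with
`t ≤ (1−α) log₂(Σ_{i=0}^{u} C(k,i)) / log₂((1−p)/p)` has average error probability at
least `1 − δ` over BSC(p), for every decoder. -/
theorem stmt_19 (p α δ : ℝ) (hp0 : 0 < p) (hp1 : p < 1 / 2) (hα0 : 0 < α) (hα1 : α < 1)
    (hδ : 0 < δ) :
    ∃ k₀ : ℕ, ∀ k : ℕ, k₀ ≤ k → ∀ u : ℕ, 1 ≤ u → u ≤ k → ∀ n t : ℕ,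
      ∀ φ : (Fin k → ZMod 2) → (Fin n → ZMod 2), Function.Injective φ →
      (∀ x e : Fin k → ZMod 2, hammingNorm e ≤ u → hammingNorm (φ (x + e) - φ x) ≤ t) →
      (t : ℝ) ≤ (1 - α) *
          Real.logb 2 (∑ i ∈ Finset.range (u + 1), (k.choose i : ℝ)) /
          Real.logb 2 ((1 - p) / p) →
      ∀ ψ : (Fin n → ZMod 2) → (Fin k → ZMod 2),
        1 - δ ≤ (2 : ℝ) ^ (-(k : ℝ)) * ∑ x : Fin k → ZMod 2, ∑ e : Fin n → ZMod 2,
          bscProb p e * (if ψ (φ x + e) ≠ x then 1 else 0) := by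
  obtain ⟨k₀, hk₀⟩ := exists_nat_ge (δ ^ (-(1/α)))
  refine ⟨k₀, ?_⟩
  intro k hk u hu1 huk n t φ hφ hupd ht ψ
  have hq0 : (0:ℝ) < 1 - p := by linarith
  set r : ℝ := (1-p)/p with hr
  have hr1 : 1 < r := by rw [hr, lt_div_iff₀ hp0]; linarith
  have hr0 : (0:ℝ) < r := by linarith
  set B : Finset (Fin k → ZMod 2) := univ.filter fun e => hammingNorm e ≤ u with hB
  set V : ℝ := ∑ i ∈ Finset.range (u+1), (k.choose i : ℝ) with hV
  have hVcard : (B.card : ℝ) = V := by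
    rw [hB, card_ball, hV]; push_cast; rfl
  set P : (Fin k → ZMod 2) → ℝ :=
    fun x => ∑ e : Fin n → ZMod 2, bscProb p e * (if ψ (φ x + e) = x then 1 else 0) with hP
  have hPalt : ∀ x, P x
      = ∑ y : Fin n → ZMod 2, bscProb p (y - φ x) * (if ψ y = x then 1 else 0) := by
    intro x
    exact Fintype.sum_equiv (Equiv.addLeft (φ x)) _ _ (fun e => congrArg (· * _) (congrArg (bscProb p) (add_sub_cancel_left (φ x) e).symm))
  have hcenter : ∀ c : Fin n → ZMod 2, ∑ y : Fin n → ZMod 2, bscProb p (y - c) = 1 := by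
    intro c
    rw [(Fintype.sum_equiv (Equiv.addLeft c) (fun e => bscProb p e)
      (fun y => bscProb p (y - c)) (fun e => by simp)).symm]
    exact bsc_sum_one p n
  -- ball bound
  have hball : ∀ x₀, ∑ d ∈ B, P (x₀ + d) ≤ r ^ t := by
    intro x₀
    calc ∑ d ∈ B, P (x₀ + d)
        ≤ ∑ d ∈ B, ∑ y : Fin n → ZMod 2,
            (r^t * bscProb p (y - φ x₀)) * (if ψ y = x₀ + d then 1 else 0) := by
          apply Finset.sum_le_sum
          intro d hd
          rw [hPalt]
          apply Finset.sum_le_sum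
          intro y _
          apply mul_le_mul_of_nonneg_right _ (by positivity)
          have hdiff : (y - φ x₀) - (y - φ (x₀ + d)) = φ (x₀ + d) - φ x₀ := by abel
          have hw : hammingNorm ((y - φ x₀) - (y - φ (x₀ + d))) ≤ t := by
            rw [hdiff]; exact hupd x₀ d (Finset.mem_filter.mp hd).2
          exact bsc_shift hp0 hp1 hw
      _ = ∑ y : Fin n → ZMod 2, (r^t * bscProb p (y - φ x₀))
            * ∑ d ∈ B, (if ψ y = x₀ + d then 1 else 0) := by
          rw [Finset.sum_comm]
          exact Finset.sum_congr rfl fun y _ => (Finset.mul_sum _ _ _).symm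
      _ ≤ ∑ y : Fin n → ZMod 2, (r^t * bscProb p (y - φ x₀)) * 1 := by
          apply Finset.sum_le_sum
          intro y _
          have hnn : 0 ≤ r^t * bscProb p (y - φ x₀) :=
            mul_nonneg (by positivity) (bsc_nonneg hp0.le (by linarith) _)
          apply mul_le_mul_of_nonneg_left _ hnn
          have hcard1 : (B.filter fun d => ψ y = x₀ + d).card ≤ 1 :=
            Finset.card_le_one.mpr (fun a ha b hb => by
              simp only [Finset.mem_filter] at ha hb
              exact add_left_cancel (ha.2.symm.trans hb.2))
          calc (∑ d ∈ B, if ψ y = x₀ + d then (1:ℝ) else 0)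
              = ((B.filter fun d => ψ y = x₀ + d).card : ℝ) := by
                rw [Finset.sum_boole]
            _ ≤ 1 := by exact_mod_cast hcard1
      _ = r^t * ∑ y : Fin n → ZMod 2, bscProb p (y - φ x₀) := by
          simp_rw [mul_one]
          exact (Finset.mul_sum _ _ _).symm
      _ = r^t := by rw [hcenter, mul_one]
  set S : ℝ := ∑ x : Fin k → ZMod 2, P x with hS
  have hglobal : V * S ≤ 2^k * r^t := by
    have h1 : ∑ x₀ : Fin k → ZMod 2, ∑ d ∈ B, P (x₀ + d)
        ≤ ∑ _x₀ : Fin k → ZMod 2, r^t := Finset.sum_le_sum fun x₀ _ => hball x₀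
    have h2 : ∑ x₀ : Fin k → ZMod 2, ∑ d ∈ B, P (x₀ + d) = V * S := by
      rw [Finset.sum_comm]
      rw [Finset.sum_congr rfl
        (fun d _ => Fintype.sum_equiv (Equiv.addRight d) (fun x₀ => P (x₀ + d)) P
          (fun x₀ => rfl))]
      rw [Finset.sum_const, nsmul_eq_mul, hVcard]
    have h3 : ∑ _x₀ : Fin k → ZMod 2, (r^t : ℝ) = 2^k * r^t := by
      rw [Finset.sum_const, Finset.card_univ, nsmul_eq_mul]
      norm_num
    rw [h2, h3] at h1
    exact h1
  have hkV : (k:ℝ) + 1 ≤ V := by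
    rw [hV]
    have hsub : Finset.range 2 ⊆ Finset.range (u+1) := by
      intro j hj; simp only [Finset.mem_range] at hj ⊢; omega
    have hmono := Finset.sum_le_sum_of_subset_of_nonneg
      (f := fun i => (k.choose i : ℝ)) hsub (fun i _ _ => by positivity)
    calc (k:ℝ) + 1 = ∑ i ∈ Finset.range 2, (k.choose i : ℝ) := by
          rw [Finset.sum_range_succ, Finset.sum_range_one]
          simp [Nat.choose_one_right]; ring
      _ ≤ _ := hmono
  have hk1 : (1:ℝ) ≤ (k:ℝ) := by exact_mod_cast le_trans hu1 huk
  have hVpos : (0:ℝ) < V := by linarith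
  have hlogr : 0 < Real.logb 2 r := Real.logb_pos one_lt_two hr1
  have htlog : (t:ℝ) * Real.log r ≤ (1-α) * Real.log V := by
    have h2 := (le_div_iff₀ hlogr).mp ht
    rw [Real.logb, Real.logb] at h2
    have hl2 : (0:ℝ) < Real.log 2 := Real.log_pos one_lt_two
    have h3 := mul_le_mul_of_nonneg_right h2 hl2.le
    calc (t:ℝ) * Real.log r = (t:ℝ) * (Real.log r / Real.log 2) * Real.log 2 := by
          field_simp
      _ ≤ (1-α) * (Real.log V / Real.log 2) * Real.log 2 := h3
      _ = (1-α) * Real.log V := by field_simp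
  have hrt : (r:ℝ)^t ≤ V ^ ((1:ℝ)-α) := by
    rw [← Real.rpow_natCast r t, Real.rpow_def_of_pos hr0, Real.rpow_def_of_pos hVpos]
    apply Real.exp_le_exp.mpr
    rw [mul_comm (Real.log r), mul_comm (Real.log V)]
    exact htlog
  have hsplit : V ^ ((1:ℝ)-α) = V * V^(-α) := by
    rw [show ((1:ℝ)-α) = 1 + (-α) by ring, Real.rpow_add hVpos, Real.rpow_one]
  have hSle : S ≤ 2^k * V^(-α) := by
    have h4 : V * S ≤ V * (2^k * V^(-α)) := by
      calc V * S ≤ 2^k * r^t := hglobal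
        _ ≤ 2^k * V^((1:ℝ)-α) := mul_le_mul_of_nonneg_left hrt (by positivity)
        _ = V * (2^k * V^(-α)) := by rw [hsplit]; ring
    exact le_of_mul_le_mul_left h4 hVpos
  have h5 : V^(-α) ≤ ((k:ℝ)+1)^(-α) :=
    Real.rpow_le_rpow_of_nonpos (by linarith) hkV (by linarith)
  have h6 : ((k:ℝ)+1)^(-α) ≤ δ := by
    have hkk : δ ^ (-(1/α)) ≤ (k:ℝ) + 1 := by
      have hcast : (k₀:ℝ) ≤ (k:ℝ) := by exact_mod_cast hk
      linarith
    have h7 := Real.rpow_le_rpow (Real.rpow_pos_of_pos hδ _).le hkk hα0.le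
    rw [← Real.rpow_mul hδ.le] at h7
    rw [show (-(1/α))*α = -1 by field_simp] at h7
    rw [Real.rpow_neg_one] at h7
    have h8 : (0:ℝ) < ((k:ℝ)+1) ^ (α:ℝ) := Real.rpow_pos_of_pos (by positivity) _
    rw [Real.rpow_neg (by positivity), inv_le_comm₀ h8 hδ]
    exact h7
  have hSδ : S ≤ 2^k * δ := by
    calc S ≤ 2^k * V^(-α) := hSle
      _ ≤ 2^k * (((k:ℝ)+1)^(-α)) := mul_le_mul_of_nonneg_left h5 (by positivity)
      _ ≤ 2^k * δ := mul_le_mul_of_nonneg_left h6 (by positivity)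
  have herr : ∀ x : Fin k → ZMod 2, (∑ e : Fin n → ZMod 2,
      bscProb p e * (if ψ (φ x + e) ≠ x then 1 else 0)) = 1 - P x := by
    intro x
    have hterm : ∀ e : Fin n → ZMod 2, bscProb p e * (if ψ (φ x + e) ≠ x then 1 else 0)
        = bscProb p e - bscProb p e * (if ψ (φ x + e) = x then 1 else 0) := by
      intro e; by_cases hc : ψ (φ x + e) = x <;> simp [hc]
    rw [Finset.sum_congr rfl fun e _ => hterm e, Finset.sum_sub_distrib, bsc_sum_one]
  rw [Finset.sum_congr rfl fun x _ => herr x, Finset.sum_sub_distrib, Finset.sum_const,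
    Finset.card_univ, nsmul_eq_mul, mul_one]
  have hcard : (Fintype.card (Fin k → ZMod 2) : ℝ) = 2^k := by norm_num
  rw [hcard]
  have h2k : (2:ℝ)^(-(k:ℝ)) = ((2:ℝ)^k)⁻¹ := by
    rw [Real.rpow_neg (by norm_num), Real.rpow_natCast]
  rw [h2k]
  have hpow : (0:ℝ) < 2^k := by positivity
  rw [mul_sub, inv_mul_cancel₀ (ne_of_gt hpow)]
  have hfin : ((2:ℝ)^k)⁻¹ * S ≤ δ := by
    rw [inv_mul_le_iff₀ hpow]
    exact hSδ
  linarith
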